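/- Let Γ be a group acting by homeomorphisms on a Hausdorff topological space Ω. Assume that the action is strongly faithful, strongly hyperbolic, and minimal. Then Γ is a Powers group. -/
import Mathlib


open Filter Set

section PowersDefs

def IsPowersGroup (Γ : Type*) [Group Γ] : Prop :=
  Nontrivial Γ ∧
    ∀ F : Finset Γ, (1 : Γ) ∉ F → ∀ N : ℕ, 1 ≤ N →
      ∃ (C : Set Γ) (g : Fin N → Γ),
        (∀ f ∈ F, (fun x => f * x) '' C ∩ C = ∅) ∧
        ∀ j k : Fin N, j ≠ k →
          (fun x => g j * x) '' Cᶜ ∩ (fun x => g k * x) '' Cᶜ = ∅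

def IsSubnormalIn {Γ : Type*} [Group Γ] (N : Subgroup Γ) : Prop :=
  ∃ (k : ℕ) (c : ℕ → Subgroup Γ), c 0 = N ∧ c k = ⊤ ∧
    ∀ i < k, c i ≤ c (i + 1) ∧ ∀ x ∈ c (i + 1), ∀ y ∈ c i, x * y * x⁻¹ ∈ c i

def IsStronglyPowersGroup (Γ : Type*) [Group Γ] : Prop :=
  ∀ N : Subgroup Γ, IsSubnormalIn N → N ≠ ⊥ → IsPowersGroup N

end PowersDefs

section HomeoDefs

variable {Γ : Type*} [Group Γ]

/-- Each group element acts continuously (hence, the group acting, by homeomorphisms). -/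
def ActsByHomeos (Γ : Type*) [Group Γ] (Ω : Type*) [TopologicalSpace Ω] [MulAction Γ Ω] :
    Prop :=
  ∀ γ : Γ, Continuous fun x : Ω => γ • x

/-- `ω` is a sink of the hyperbolic homeomorphism `γ`: there is a source `α` fixed by `γ`
such that `γ` is hyperbolic with attracting point `ω` and repelling point `α`. -/
def IsSinkOf {Ω : Type*} [TopologicalSpace Ω] [MulAction Γ Ω] (γ : Γ) (ω : Ω) : Prop :=
  ∃ α : Ω, γ • α = α ∧ γ • ω = ω ∧
    ∀ U ∈ nhds α, ∀ W ∈ nhds ω, ∀ᶠ n : ℕ in Filter.atTop,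
      (∀ x : Ω, x ∉ U → γ ^ n • x ∈ W) ∧ (∀ x : Ω, x ∉ W → γ⁻¹ ^ n • x ∈ U)

/-- A hyperbolic homeomorphism. -/
def IsHypHomeo (Ω : Type*) [TopologicalSpace Ω] [MulAction Γ Ω] (γ : Γ) : Prop :=
  ∃ ω : Ω, IsSinkOf γ ω

/-- Two homeomorphisms are transverse if they have no common fixed point. -/
def TransverseOn (Ω : Type*) [MulAction Γ Ω] (γ δ : Γ) : Prop :=
  ¬ ∃ x : Ω, γ • x = x ∧ δ • x = x

/-- A strongly hyperbolic action by homeomorphisms: there is a pair of transverse hyperbolic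
homeomorphisms in the group. -/
def StronglyHypHomeoAction (Γ : Type*) [Group Γ] (Ω : Type*) [TopologicalSpace Ω]
    [MulAction Γ Ω] : Prop :=
  ∃ γ δ : Γ, IsHypHomeo Ω γ ∧ IsHypHomeo Ω δ ∧ TransverseOn Ω γ δ

/-- The set `L_N` of sinks of hyperbolic elements of a subgroup `N`. -/
def sinkSet (Ω : Type*) [TopologicalSpace Ω] [MulAction Γ Ω] (N : Subgroup Γ) : Set Ω :=
  {ω : Ω | ∃ γ ∈ N, IsSinkOf γ ω}

/-- A strongly faithful action on the subset `S`. -/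
def StronglyFaithfulOn (Γ : Type*) [Group Γ] {Ω : Type*} [MulAction Γ Ω] (S : Set Ω) :
    Prop :=
  ∀ F : Finset Γ, (1 : Γ) ∉ F → ∃ ω ∈ S, ∀ γ ∈ F, γ • ω ≠ ω

/-- A minimal action by homeomorphisms: the only invariant closed subsets are trivial. -/
def MinimalHomeoAction (Γ : Type*) [Group Γ] (Ω : Type*) [TopologicalSpace Ω]
    [MulAction Γ Ω] : Prop :=
  ∀ C : Set Ω, IsClosed C → (∀ γ : Γ, ∀ x ∈ C, γ • x ∈ C) → C = ∅ ∨ C = Set.univ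

end HomeoDefs


section AuxProofs

variable {Γ : Type*} [Group Γ] {Ω : Type*} [TopologicalSpace Ω] [MulAction Γ Ω]

/-- A sink-source pair for `γ`. -/
def SinkPair (γ : Γ) (α ω : Ω) : Prop :=
  γ • α = α ∧ γ • ω = ω ∧
    ∀ U ∈ nhds α, ∀ W ∈ nhds ω, ∀ᶠ n : ℕ in Filter.atTop,
      (∀ x : Ω, x ∉ U → γ ^ n • x ∈ W) ∧ (∀ x : Ω, x ∉ W → γ⁻¹ ^ n • x ∈ U)

lemma sinkPair_conj (hcont : ActsByHomeos Γ Ω) {γ : Γ} {α ω : Ω}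
    (hs : SinkPair γ α ω) (h : Γ) :
    SinkPair (h * γ * h⁻¹) (h • α) (h • ω) := by
  obtain ⟨hα, hω, hf⟩ := hs
  have hfix : ∀ {y : Ω}, γ • y = y → (h * γ * h⁻¹) • (h • y) = h • y := by
    intro y hy
    rw [mul_smul, mul_smul, inv_smul_smul, hy]
  refine ⟨hfix hα, hfix hω, ?_⟩
  intro U hU W hW
  have hcU : (fun x : Ω => h • x) ⁻¹' U ∈ nhds α :=
    ((hcont h).continuousAt (x := α)).preimage_mem_nhds hU
  have hcW : (fun x : Ω => h • x) ⁻¹' W ∈ nhds ω :=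
    ((hcont h).continuousAt (x := ω)).preimage_mem_nhds hW
  filter_upwards [hf _ hcU _ hcW] with n hn
  obtain ⟨h1, h2⟩ := hn
  constructor
  · intro x hx
    have hx' : h⁻¹ • x ∉ (fun y : Ω => h • y) ⁻¹' U := by
      simp only [Set.mem_preimage, smul_inv_smul]
      exact hx
    have hres := h1 _ hx'
    have hpow : (h * γ * h⁻¹) ^ n = h * γ ^ n * h⁻¹ := conj_pow
    rw [hpow, mul_smul, mul_smul]
    exact hres
  · intro x hx
    have hx' : h⁻¹ • x ∉ (fun y : Ω => h • y) ⁻¹' W := by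
      simp only [Set.mem_preimage, smul_inv_smul]
      exact hx
    have hres := h2 _ hx'
    have hinv : (h * γ * h⁻¹)⁻¹ = h * γ⁻¹ * h⁻¹ := by group
    have hpow : (h * γ * h⁻¹)⁻¹ ^ n = h * γ⁻¹ ^ n * h⁻¹ := by rw [hinv]; exact conj_pow
    rw [hpow, mul_smul, mul_smul]
    exact hres

lemma exists_smul_mem_of_minimal (hcont : ActsByHomeos Γ Ω)
    (hmin : MinimalHomeoAction Γ Ω) (ω : Ω) {U : Set Ω}
    (hUo : IsOpen U) (hUne : U.Nonempty) : ∃ h : Γ, h • ω ∈ U := by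
  by_contra hc
  push_neg at hc
  have hinv : ∀ γ : Γ, ∀ x ∈ closure (MulAction.orbit Γ ω),
      γ • x ∈ closure (MulAction.orbit Γ ω) := by
    intro γ
    have hm : Set.MapsTo (fun x : Ω => γ • x) (MulAction.orbit Γ ω) (MulAction.orbit Γ ω) := by
      rintro _ ⟨g, rfl⟩
      exact ⟨γ * g, by simp [mul_smul]⟩
    exact fun x hx => hm.closure (hcont γ) hx
  rcases hmin _ isClosed_closure hinv with hemp | huniv
  · have : ω ∈ closure (MulAction.orbit Γ ω) :=
      subset_closure (MulAction.mem_orbit_self ω)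
    rw [hemp] at this
    exact this
  · obtain ⟨u, hu⟩ := hUne
    have hmem : u ∈ closure (MulAction.orbit Γ ω) := by rw [huniv]; trivial
    rcases mem_closure_iff.mp hmem U hUo hu with ⟨y, hyU, g, hgy⟩
    have : g • ω = y := hgy
    exact hc g (this ▸ hyU)

lemma exists_open_sep [T2Space Ω] (hcont : ActsByHomeos Γ Ω) (x : Ω) :
    ∀ F : Finset Γ, (∀ f ∈ F, f • x ≠ x) →
    ∃ U : Set Ω, IsOpen U ∧ x ∈ U ∧ ∀ f ∈ F, ∀ u ∈ U, f • u ∉ U := by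
  classical
  intro F
  induction F using Finset.induction_on with
  | empty => exact fun _ => ⟨Set.univ, isOpen_univ, Set.mem_univ x, by simp⟩
  | @insert a s ha ih =>
    intro hF
    obtain ⟨U, hUo, hxU, hU⟩ := ih (fun f hf => hF f (Finset.mem_insert_of_mem hf))
    have hax : a • x ≠ x := hF a (Finset.mem_insert_self a s)
    obtain ⟨V, W, hVo, hWo, haV, hxW, hVW⟩ := t2_separation hax
    refine ⟨U ∩ W ∩ (fun y : Ω => a • y) ⁻¹' V, (hUo.inter hWo).inter (hVo.preimage (hcont a)),
      ⟨⟨hxU, hxW⟩, haV⟩, ?_⟩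
    intro f hf u hu hfu
    rcases Finset.mem_insert.mp hf with rfl | hfs
    · exact Set.disjoint_left.mp hVW hu.2 hfu.1.2
    · exact hU f hfs u hu.1.1 hfu.1.1

end AuxProofs

theorem statement13 {Γ : Type*} [Group Γ] {Ω : Type*} [TopologicalSpace Ω] [T2Space Ω]
    [MulAction Γ Ω] (hcont : ActsByHomeos Γ Ω)
    (hfaith : StronglyFaithfulOn Γ (Set.univ : Set Ω))
    (hsh : StronglyHypHomeoAction Γ Ω)
    (hmin : MinimalHomeoAction Γ Ω) :
    IsPowersGroup Γ := by
  classical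
  obtain ⟨γ, δ, ⟨ωγ, αγ, hγα, hγω, hγf⟩, ⟨ωδ, αδ, hδα, hδω, hδf⟩, htr⟩ := hsh
  constructor
  · rcases subsingleton_or_nontrivial Γ with hss | hnt
    · exact absurd ⟨αγ, hγα, (Subsingleton.elim δ γ) ▸ hγα⟩ htr
    · exact hnt
  · intro F hF1 N hN
    obtain ⟨x₀, -, hx₀⟩ := hfaith F hF1
    obtain ⟨U, hUo, hxU, hUsep⟩ := exists_open_sep hcont x₀ F hx₀
    obtain ⟨h, hhU⟩ := exists_smul_mem_of_minimal hcont hmin ωγ hUo ⟨x₀, hxU⟩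
    set U₂ : Set Ω := (fun y : Ω => h • y) ⁻¹' U with hU₂def
    have hU₂o : IsOpen U₂ := hUo.preimage (hcont h)
    have hωγU₂ : ωγ ∈ U₂ := hhU
    have hαδne : αδ ≠ αγ := fun he => htr ⟨αγ, hγα, he ▸ hδα⟩
    have hωδne : ωδ ≠ αγ := fun he => htr ⟨αγ, hγα, he ▸ hδω⟩
    obtain ⟨A₁, B₁, hA₁o, _, hαA₁, hαδB₁, hd₁⟩ := t2_separation hαδne.symm
    obtain ⟨A₂, B₂, hA₂o, _, hαA₂, hωδB₂, hd₂⟩ := t2_separation hωδne.symm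
    have hAnhd : A₁ ∩ A₂ ∈ nhds αγ := (hA₁o.inter hA₂o).mem_nhds ⟨hαA₁, hαA₂⟩
    have hU₂nhd : U₂ ∈ nhds ωγ := hU₂o.mem_nhds hωγU₂
    obtain ⟨n, hn⟩ := (hγf _ hAnhd _ hU₂nhd).exists
    have hαδ' : γ ^ n • αδ ∈ U₂ :=
      hn.1 αδ (fun hmem => Set.disjoint_left.mp hd₁ hmem.1 hαδB₁)
    have hωδ' : γ ^ n • ωδ ∈ U₂ :=
      hn.1 ωδ (fun hmem => Set.disjoint_left.mp hd₂ hmem.2 hωδB₂)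
    have hsp : SinkPair δ αδ ωδ := ⟨hδα, hδω, hδf⟩
    have hsp' := sinkPair_conj hcont hsp (h * γ ^ n)
    set g : Γ := (h * γ ^ n) * δ * (h * γ ^ n)⁻¹ with hgdef
    have hαgU : (h * γ ^ n) • αδ ∈ U := by rw [mul_smul]; exact hαδ'
    have hωgU : (h * γ ^ n) • ωδ ∈ U := by rw [mul_smul]; exact hωδ'
    obtain ⟨-, -, hgf⟩ := hsp'
    obtain ⟨M, hM⟩ := Filter.eventually_atTop.mp
      (hgf U (hUo.mem_nhds hαgU) U (hUo.mem_nhds hωgU))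
    set M' : ℕ := M + 1 with hM'def
    have hM' : ∀ m : ℕ, M' ≤ m →
        (∀ y : Ω, y ∉ U → g ^ m • y ∈ U) ∧ (∀ y : Ω, y ∉ U → g⁻¹ ^ m • y ∈ U) :=
      fun m hm => hM m (le_trans (Nat.le_succ M) hm)
    refine ⟨{c : Γ | c • x₀ ∈ U}, fun j => g ^ ((j.1 + 1) * M'), ?_, ?_⟩
    · intro f hf
      ext a
      simp only [Set.mem_inter_iff, Set.mem_image, Set.mem_setOf_eq,
        Set.mem_empty_iff_false, iff_false, not_and]
      rintro ⟨c, hc, rfl⟩ hac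
      exact hUsep f hf (c • x₀) hc (by rwa [mul_smul] at hac)
    · intro j k hjk
      ext a
      simp only [Set.mem_inter_iff, Set.mem_image, Set.mem_compl_iff, Set.mem_setOf_eq,
        Set.mem_empty_iff_false, iff_false, not_and]
      rintro ⟨c, hc, rfl⟩ ⟨d, hd, heq⟩
      have hdval : d = (g ^ ((k.1 + 1) * M'))⁻¹ * (g ^ ((j.1 + 1) * M') * c) := by
        rw [← heq, inv_mul_cancel_left]
      have hjkval : j.1 ≠ k.1 := fun he => hjk (Fin.ext he)
      rcases lt_or_gt_of_ne hjkval with hlt | hgt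
      · -- j < k : use g⁻¹ direction
        set e : ℕ := (k.1 - j.1) * M' with hedef
        have hsum : (k.1 + 1) * M' = (j.1 + 1) * M' + e := by
          rw [hedef, ← Nat.add_mul]
          congr 1
          omega
        have hkey : (g ^ ((k.1 + 1) * M'))⁻¹ * g ^ ((j.1 + 1) * M') = g⁻¹ ^ e := by
          calc (g ^ ((k.1 + 1) * M'))⁻¹ * g ^ ((j.1 + 1) * M')
              = (g ^ ((j.1 + 1) * M') * g ^ e)⁻¹ * g ^ ((j.1 + 1) * M') := by
                rw [← pow_add, ← hsum]
            _ = (g ^ e)⁻¹ * ((g ^ ((j.1 + 1) * M'))⁻¹ * g ^ ((j.1 + 1) * M')) := by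
                rw [mul_inv_rev, mul_assoc]
            _ = g⁻¹ ^ e := by rw [inv_mul_cancel, mul_one, inv_pow]
        have hdsmul : d • x₀ = g⁻¹ ^ e • (c • x₀) := by
          rw [hdval, ← mul_assoc, hkey, mul_smul]
        have heM : M' ≤ e := Nat.le_mul_of_pos_left M' (by omega)
        exact hd (hdsmul ▸ (hM' e heM).2 (c • x₀) hc)
      · -- k < j : use g direction
        set e : ℕ := (j.1 - k.1) * M' with hedef
        have hsum : (j.1 + 1) * M' = (k.1 + 1) * M' + e := by
          rw [hedef, ← Nat.add_mul]
          congr 1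
          omega
        have hkey : (g ^ ((k.1 + 1) * M'))⁻¹ * g ^ ((j.1 + 1) * M') = g ^ e := by
          rw [hsum, pow_add, inv_mul_cancel_left]
        have hdsmul : d • x₀ = g ^ e • (c • x₀) := by
          rw [hdval, ← mul_assoc, hkey, mul_smul]
        have heM : M' ≤ e := Nat.le_mul_of_pos_left M' (by omega)
        exact hd (hdsmul ▸ (hM' e heM).1 (c • x₀) hc)
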